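/- Let $A = \mathbb{Q}[p_1,\dots,p_n, p'_1,\dots,p'_k]$, graded with $\deg p_i = 4i$, $\deg p'_j = 4j$, and let $I$ be the ideal generated by the homogeneous elements $s_\ell = \sum_{i+j=\ell} p_i p'_j$ for $1 \le \ell \le n+k$ (with $p_0 = p'_0 = 1$ and out-of-range variables zero). Then the quotient $A/I$ is a finite-dimensional $\mathbb{Q}$-vector space of dimension $\binom{n+k}{n}$. -/

import Mathlib

section GivenDefs

open MvPolynomial

/-- Total-class convention: `cls v 0 = 1`, `cls v i = vᵢ` for `1 ≤ i ≤ m`, and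
`cls v i = 0` for `i > m`. -/
def cls {A : Type} [CommRing A] {m : ℕ} (v : Fin m → A) : ℕ → A := fun i =>
  if i = 0 then 1 else if h : i - 1 < m then v ⟨i - 1, h⟩ else 0

/-- The polynomial ring `ℚ[p₁,…,p_n, p'₁,…,p'_k]` (graded with `deg pᵢ = 4i`,
`deg p'ⱼ = 4j`, with respect to which the `s_ℓ` below are homogeneous). -/
abbrev PRing (n k : ℕ) := MvPolynomial (Fin n ⊕ Fin k) ℚ

/-- `s_ℓ = Σ_{i+j=ℓ} pᵢ p'ⱼ`. -/
noncomputable def sPol (n k : ℕ) (ℓ : ℕ) : PRing n k :=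
  ∑ ij ∈ Finset.HasAntidiagonal.antidiagonal ℓ,
    cls (fun i : Fin n => X (Sum.inl i)) ij.1 *
      cls (fun j : Fin k => X (Sum.inr j)) ij.2

end GivenDefs

open Polynomial

namespace Grassmann



variable {R : Type*} [CommRing R]

noncomputable def theta (f : R[X]) (m : ℕ) (v : Fin m → R[X]) : R[X] :=
  ∑ t : Fin m, X ^ (t : ℕ) * (v t).comp f

lemma theta_surjective (f : R[X]) (hf : f.Monic) (m : ℕ) (hm : f.natDegree = m)
    (h0 : m ≠ 0) : Function.Surjective (theta f m) := by
  have small : ∀ p : R[X], p.natDegree < m → theta f m (fun t => C (p.coeff t)) = p := by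
    intro p hd
    have hrepr := Polynomial.as_sum_range' p m hd
    rw [theta]
    conv_rhs => rw [hrepr]
    rw [Finset.sum_range fun i => (Polynomial.monomial i) (p.coeff i)]
    refine Finset.sum_congr rfl fun t _ => ?_
    rw [Polynomial.C_comp, ← Polynomial.C_mul_X_pow_eq_monomial, mul_comm]
  have H : ∀ d p, (p : R[X]).natDegree = d → ∃ v, theta f m v = p := by
    intro d
    induction d using Nat.strong_induction_on with
    | _ d ih =>
      intro p hp
      by_cases hd : p.natDegree < m
      · exact ⟨fun t => C (p.coeff t), small p hd⟩
      · push_neg at hd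
        rcases subsingleton_or_nontrivial R with hR | hR
        · exact ⟨0, Subsingleton.elim _ _⟩
        have h1 : (p /ₘ f).natDegree = p.natDegree - m := by
          rw [Polynomial.natDegree_divByMonic p hf, hm]
        have hq : (p /ₘ f).natDegree < d := by
          have h0' := Nat.pos_of_ne_zero h0
          omega
        obtain ⟨v, hv⟩ := ih _ hq (p /ₘ f) rfl
        refine ⟨fun t => X * v t + C ((p %ₘ f).coeff t), ?_⟩
        have hmod : (p %ₘ f).natDegree < m := by
          have hdeg := Polynomial.degree_modByMonic_lt p hf
          have hfd : f.degree = (m : ℕ) := by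
            rw [← hm]; exact Polynomial.degree_eq_natDegree hf.ne_zero
          rw [hfd] at hdeg
          by_cases hz : p %ₘ f = 0
          · rw [hz]; simpa using Nat.pos_of_ne_zero h0
          · exact_mod_cast (Polynomial.degree_eq_natDegree hz ▸ hdeg)
        have hsplit : theta f m (fun t => X * v t + C ((p %ₘ f).coeff t))
            = f * theta f m v + theta f m (fun t => C ((p %ₘ f).coeff t)) := by
          rw [theta, theta, theta, Finset.mul_sum, ← Finset.sum_add_distrib]
          refine Finset.sum_congr rfl fun t _ => ?_
          simp only [Polynomial.add_comp, Polynomial.mul_comp, Polynomial.X_comp]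
          ring
        rw [hsplit, small _ hmod, hv, add_comm]
        exact Polynomial.modByMonic_add_div p f
  intro p; exact H p.natDegree p rfl

lemma theta_injective (f : R[X]) (hf : f.Monic) (m : ℕ) (hm : f.natDegree = m)
    (h0 : m ≠ 0) : Function.Injective (theta f m) := by
  classical
  have key : ∀ v : Fin m → R[X], theta f m v = 0 → v = 0 := by
    intro v hv
    by_contra hne
    have hS : (Finset.univ.filter (fun t => v t ≠ 0)).Nonempty := by
      rw [Finset.filter_nonempty_iff]
      simpa [funext_iff] using hne
    obtain ⟨t₀, ht₀S, ht₀max⟩ :=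
      Finset.exists_max_image _ (fun t => (v t).natDegree * m + (t : ℕ)) hS
    have hv0 : v t₀ ≠ 0 := by simpa using (Finset.mem_filter.1 ht₀S).2
    set D : ℕ := (v t₀).natDegree * m + (t₀ : ℕ) with hD
    have hcoeff : (theta f m v).coeff D = (v t₀).leadingCoeff := by
      rw [theta, Polynomial.finset_sum_coeff]
      have hmain : ∀ t : Fin m, t ∈ Finset.univ →
          (X ^ (t : ℕ) * (v t).comp f).coeff D
          = if t = t₀ then (v t₀).leadingCoeff else 0 := by
        intro t _
        rw [mul_comm, Polynomial.coeff_mul_X_pow']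
        by_cases hteq : t = t₀
        · subst hteq
          rw [if_pos (by omega), if_pos rfl, hD, Nat.add_sub_cancel, ← hm,
            Polynomial.coeff_comp_degree_mul_degree (hm ▸ h0), hf.leadingCoeff]
          simp
        · rw [if_neg hteq]
          by_cases hvt : v t = 0
          · simp [hvt]
          by_cases hle : (t : ℕ) ≤ D
          · rw [if_pos hle]
            apply Polynomial.coeff_eq_zero_of_natDegree_lt
            have h1 : ((v t).comp f).natDegree ≤ (v t).natDegree * m := by
              rw [← hm]; exact Polynomial.natDegree_comp_le
            have h2 : (v t).natDegree * m + (t : ℕ) ≤ D := ht₀max t (by simp [hvt])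
            have h3 : (v t).natDegree * m + (t : ℕ) ≠ D := by
              intro h
              apply hteq
              have e : ∀ a b : ℕ, (a * m + b) % m = b % m := by
                intro a b; rw [Nat.add_comm, Nat.add_mul_mod_self_right]
              have hmm : ((v t).natDegree * m + (t : ℕ)) % m = D % m := by rw [h]
              rw [hD, e, e] at hmm
              exact Fin.ext (by rwa [Nat.mod_eq_of_lt t.isLt, Nat.mod_eq_of_lt t₀.isLt] at hmm)
            omega
          · rw [if_neg hle]
      rw [Finset.sum_congr rfl hmain, Finset.sum_ite_eq' Finset.univ t₀]
      simp
    rw [hv] at hcoeff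
    simp only [Polynomial.coeff_zero] at hcoeff
    exact hv0 (Polynomial.leadingCoeff_eq_zero.1 hcoeff.symm)
  intro v w hvw
  have hsub : theta f m (v - w) = 0 := by
    rw [theta]
    have hterm : ∀ t : Fin m, X ^ (t : ℕ) * ((v - w) t).comp f
        = X ^ (t : ℕ) * (v t).comp f - X ^ (t : ℕ) * (w t).comp f := by
      intro t; simp only [Pi.sub_apply, Polynomial.sub_comp]; ring
    rw [Finset.sum_congr rfl fun t _ => hterm t, Finset.sum_sub_distrib]
    rw [← theta, ← theta, hvw, sub_self]
  have := key _ hsub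
  funext t
  have := congrFun this t
  simpa [sub_eq_zero] using this

lemma theta_bijective (f : R[X]) (hf : f.Monic) (m : ℕ) (hm : f.natDegree = m)
    (h0 : m ≠ 0) : Function.Bijective (theta f m) :=
  ⟨theta_injective f hf m hm h0, theta_surjective f hf m hm h0⟩

lemma theta_comp_neg (f : R[X]) (m : ℕ) (v : Fin m → R[X]) :
    theta f m v = theta (-f) m (fun t => (v t).comp (-X)) := by
  rw [theta, theta]
  refine Finset.sum_congr rfl fun t _ => ?_
  rw [Polynomial.comp_assoc]
  congr 2
  rw [Polynomial.neg_comp, Polynomial.X_comp, neg_neg]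

lemma theta_bijective_sign (f : R[X]) (hf : f.Monic ∨ (-f).Monic) (m : ℕ)
    (hm : f.natDegree = m) (h0 : m ≠ 0) : Function.Bijective (theta f m) := by
  rcases hf with hf | hf
  · exact theta_bijective f hf m hm h0
  · have h2 : Function.Bijective (theta (-f) m) :=
      theta_bijective _ hf m (by rw [Polynomial.natDegree_neg, hm]) h0
    have hinv : Function.Involutive (fun (v : Fin m → R[X]) t => (v t).comp (-X)) := by
      intro v
      funext t
      simp only []
      rw [Polynomial.comp_assoc, Polynomial.neg_comp, Polynomial.X_comp, neg_neg,
        Polynomial.comp_X]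
    have hcomp : theta f m = (theta (-f) m) ∘ (fun v (t : Fin m) => (v t).comp (-X)) := by
      funext v; exact theta_comp_neg f m v
    rw [hcomp]
    exact h2.comp hinv.bijective




section Transfer

variable {A B : Type*} [CommRing A] [CommRing B] [Algebra ℚ A] [Algebra ℚ B]

noncomputable def psiMap (φ : A →ₐ[ℚ] B) (y : B) (m : ℕ) : (Fin m → A) →ₗ[ℚ] B where
  toFun v := ∑ t : Fin m, y ^ (t : ℕ) * φ (v t)
  map_add' v w := by
    simp only [Pi.add_apply, map_add, mul_add]
    rw [Finset.sum_add_distrib]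
  map_smul' r v := by
    simp only [Pi.smul_apply, map_smul, RingHom.id_apply, Finset.smul_sum]
    refine Finset.sum_congr rfl fun t _ => ?_
    rw [Algebra.mul_smul_comm]

lemma transfer_equiv (φ : A →ₐ[ℚ] B) (y : B) (m : ℕ) (hm : m ≠ 0)
    (hbij : Function.Bijective (psiMap φ y m)) (G : Set A) :
    Nonempty ((B ⧸ Ideal.span (φ '' G)) ≃ₗ[ℚ] (Fin m → A ⧸ Ideal.span G)) := by
  classical
  set J : Ideal A := Ideal.span G with hJ
  set J' : Ideal B := Ideal.span (φ '' G) with hJ'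
  have hJ'map : J' = Ideal.map φ J := by rw [hJ', hJ, Ideal.map_span]
  set S : Submodule ℚ (Fin m → A) :=
    Submodule.pi Set.univ (fun _ => J.restrictScalars ℚ) with hS
  set EΨ : (Fin m → A) ≃ₗ[ℚ] B := LinearEquiv.ofBijective _ hbij with hEΨ
  have hval : ∀ v : Fin m → A, EΨ v = ∑ t : Fin m, y ^ (t : ℕ) * φ (v t) := fun v => rfl
  -- key: b * φ c ∈ image for c ∈ J
  have key1 : ∀ (b : B) (c : A), c ∈ J → b * φ c ∈ Submodule.map (EΨ : (Fin m → A) →ₗ[ℚ] B) S := by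
    intro b c hc
    obtain ⟨w, hw⟩ := hbij.2 b
    refine ⟨fun s => w s * c, ?_, ?_⟩
    · intro s _
      exact Ideal.mul_mem_left J (w s) hc
    · show EΨ _ = b * φ c
      rw [hval, ← hw]
      show ∑ t : Fin m, y ^ (t : ℕ) * φ (w t * c) = (psiMap φ y m) w * φ c
      show _ = (∑ t : Fin m, y ^ (t : ℕ) * φ (w t)) * φ c
      rw [Finset.sum_mul]
      refine Finset.sum_congr rfl fun t _ => ?_
      rw [map_mul]; ring
  have hmap : Submodule.map (EΨ : (Fin m → A) →ₗ[ℚ] B) S = J'.restrictScalars ℚ := by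
    apply le_antisymm
    · rintro b ⟨v, hvS, rfl⟩
      show EΨ v ∈ J'
      rw [hval]
      refine Ideal.sum_mem _ fun t _ => Ideal.mul_mem_left _ _ ?_
      rw [hJ'map]
      exact Ideal.mem_map_of_mem φ (hvS t (Set.mem_univ t))
    · intro b hb
      have hb' : b ∈ Ideal.span (φ '' G) := hb
      refine Submodule.span_induction ?_ ?_ ?_ ?_ hb'
      · rintro x ⟨g, hg, rfl⟩
        have := key1 1 g (Submodule.subset_span hg)
        rwa [one_mul] at this
      · exact Submodule.zero_mem _
      · intro x y _ _ hx hy; exact Submodule.add_mem _ hx hy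
      · rintro r x _ hx
        obtain ⟨v, hvS, rfl⟩ := hx
        show r • EΨ v ∈ _
        rw [smul_eq_mul, hval, Finset.mul_sum]
        refine Submodule.sum_mem _ fun t _ => ?_
        have : r * (y ^ (t : ℕ) * φ (v t)) = (r * y ^ (t : ℕ)) * φ (v t) := by ring
        rw [this]
        exact key1 _ _ (hvS t (Set.mem_univ t))
  refine ⟨?_⟩
  refine ((Submodule.Quotient.restrictScalarsEquiv ℚ J').symm.trans
    ((Submodule.Quotient.equiv S (J'.restrictScalars ℚ) EΨ hmap).symm.trans
      ((Submodule.quotientPi _).trans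
        (LinearEquiv.piCongrRight fun _ => Submodule.Quotient.restrictScalarsEquiv ℚ J))))

end Transfer

section Helpers

variable {V W : Type*} [AddCommGroup V] [Module ℚ V] [AddCommGroup W] [Module ℚ W]

lemma findim_iff_of_equiv_pi {m : ℕ} (hm : m ≠ 0) (e : V ≃ₗ[ℚ] (Fin m → W)) :
    (FiniteDimensional ℚ V ↔ FiniteDimensional ℚ W) := by
  constructor
  · intro h
    have : FiniteDimensional ℚ (Fin m → W) := Module.Finite.equiv e
    classical
    have hsingle : Function.Injective
        (LinearMap.single ℚ (fun _ : Fin m => W) ⟨0, Nat.pos_of_ne_zero hm⟩) :=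
      by rw [LinearMap.coe_single]; exact Pi.single_injective _
    exact FiniteDimensional.of_injective _ hsingle
  · intro h
    have : FiniteDimensional ℚ (Fin m → W) := by infer_instance
    exact Module.Finite.equiv e.symm

lemma finrank_of_equiv_pi {m : ℕ} (e : V ≃ₗ[ℚ] (Fin m → W))
    [FiniteDimensional ℚ W] :
    Module.finrank ℚ V = m * Module.finrank ℚ W := by
  rw [LinearEquiv.finrank_eq e, Module.finrank_pi_fintype]
  simp [Finset.sum_const, Finset.card_univ]

end Helpers




open MvPolynomial

section Step

variable (A : Type) [CommRing A] (ρ : Type) (q : ℕ)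

/-- `zfam B q ρ u` : `1` for `u = 0`, the `u`-th inl-variable for `1 ≤ u ≤ q`, `0` beyond. -/
noncomputable def zfam (B : Type) [CommRing B] (q : ℕ) (ρ : Type) :
    ℕ → MvPolynomial (Fin q ⊕ ρ) B := fun u =>
  if u = 0 then 1 else if h : u - 1 < q then X (Sum.inl ⟨u - 1, h⟩) else 0

noncomputable def cy : MvPolynomial (Fin q ⊕ ρ) (Polynomial A) := C Polynomial.X

noncomputable def zinv (u : ℕ) : MvPolynomial (Fin q ⊕ ρ) (Polynomial A) :=
  ∑ i ∈ Finset.range (u + 1), (-(cy A ρ q)) ^ i * zfam (Polynomial A) q ρ (u - i)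

lemma zfam_zero (B : Type) [CommRing B] : zfam B q ρ 0 = 1 := rfl

lemma zfam_in (B : Type) [CommRing B] {u : ℕ} (h1 : 1 ≤ u) (h2 : u ≤ q) :
    zfam B q ρ u = X (Sum.inl ⟨u - 1, by omega⟩) := by
  rw [zfam, if_neg (by omega), dif_pos]

lemma zfam_out (B : Type) [CommRing B] {u : ℕ} (h : q + 1 ≤ u) :
    zfam B q ρ u = 0 := by
  rw [zfam, if_neg (by omega), dif_neg (by omega)]

lemma zfam_val (B : Type) [CommRing B] (j : Fin q) :
    zfam B q ρ ((j : ℕ) + 1) = X (Sum.inl j) := by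
  rw [zfam, if_neg (by omega), dif_pos (by simp)]
  exact congrArg X (congrArg Sum.inl (Fin.ext (by show (j:ℕ) + 1 - 1 = (j:ℕ); omega)))

lemma zinv_zero : zinv A ρ q 0 = 1 := by
  rw [zinv]; simp [zfam_zero]

lemma zinv_succ (u : ℕ) :
    zinv A ρ q (u + 1) = zfam (Polynomial A) q ρ (u + 1) - cy A ρ q * zinv A ρ q u := by
  rw [zinv, Finset.sum_range_succ' (fun i => (-(cy A ρ q)) ^ i * zfam (Polynomial A) q ρ (u + 1 - i))]
  have h0 : (-(cy A ρ q)) ^ 0 * zfam (Polynomial A) q ρ (u + 1 - 0) = zfam (Polynomial A) q ρ (u + 1) := by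
    simp
  rw [h0, zinv, Finset.mul_sum]
  have : ∀ i ∈ Finset.range (u + 1),
      (-(cy A ρ q)) ^ (i + 1) * zfam (Polynomial A) q ρ (u + 1 - (i + 1))
      = -(cy A ρ q * ((-(cy A ρ q)) ^ i * zfam (Polynomial A) q ρ (u - i))) := by
    intro i _
    have : u + 1 - (i + 1) = u - i := by omega
    rw [this, pow_succ]
    ring
  rw [Finset.sum_congr rfl this]
  have hns : ∑ x ∈ Finset.range (u + 1),
      -(cy A ρ q * ((-cy A ρ q) ^ x * zfam (Polynomial A) q ρ (u - x)))
      = -∑ x ∈ Finset.range (u + 1),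
        cy A ρ q * ((-cy A ρ q) ^ x * zfam (Polynomial A) q ρ (u - x)) :=
    Finset.sum_neg_distrib _
  rw [hns]
  ring

/-- The substitution of the step map. -/
noncomputable def substStep : Fin (q + 1) ⊕ ρ → MvPolynomial (Fin q ⊕ ρ) (Polynomial A) :=
  fun s => Sum.elim
    (fun j : Fin (q + 1) =>
      zfam (Polynomial A) q ρ ((j : ℕ) + 1) + cy A ρ q * zfam (Polynomial A) q ρ (j : ℕ))
    (fun r : ρ => X (Sum.inr r)) s

noncomputable def stepHom : MvPolynomial (Fin (q + 1) ⊕ ρ) A →ₐ[A]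
    MvPolynomial (Fin q ⊕ ρ) (Polynomial A) :=
  aeval (substStep A ρ q)

@[simp] lemma stepHom_X_inl (j : Fin (q + 1)) :
    stepHom A ρ q (X (Sum.inl j))
    = zfam (Polynomial A) q ρ ((j : ℕ) + 1) + cy A ρ q * zfam (Polynomial A) q ρ (j : ℕ) := by
  rw [stepHom, MvPolynomial.aeval_X]; rfl

@[simp] lemma stepHom_X_inr (r : ρ) :
    stepHom A ρ q (X (Sum.inr r)) = X (Sum.inr r) := by
  rw [stepHom, MvPolynomial.aeval_X]; rfl

/-- Triangular change of variables on the target. -/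
noncomputable def chiHom : MvPolynomial (Fin q ⊕ ρ) (Polynomial A) →ₐ[Polynomial A]
    MvPolynomial (Fin q ⊕ ρ) (Polynomial A) :=
  aeval (fun s => Sum.elim
    (fun j : Fin q => X (Sum.inl j) + cy A ρ q * zfam (Polynomial A) q ρ (j : ℕ))
    (fun r : ρ => X (Sum.inr r)) s)

noncomputable def chiInvHom : MvPolynomial (Fin q ⊕ ρ) (Polynomial A) →ₐ[Polynomial A]
    MvPolynomial (Fin q ⊕ ρ) (Polynomial A) :=
  aeval (fun s => Sum.elim
    (fun j : Fin q => zinv A ρ q ((j : ℕ) + 1))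
    (fun r : ρ => X (Sum.inr r)) s)

@[simp] lemma chiHom_X_inl (j : Fin q) :
    chiHom A ρ q (X (Sum.inl j))
    = X (Sum.inl j) + cy A ρ q * zfam (Polynomial A) q ρ (j : ℕ) := by
  rw [chiHom, MvPolynomial.aeval_X]; rfl

@[simp] lemma chiHom_X_inr (r : ρ) : chiHom A ρ q (X (Sum.inr r)) = X (Sum.inr r) := by
  rw [chiHom, MvPolynomial.aeval_X]; rfl

@[simp] lemma chiInvHom_X_inl (j : Fin q) :
    chiInvHom A ρ q (X (Sum.inl j)) = zinv A ρ q ((j : ℕ) + 1) := by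
  rw [chiInvHom, MvPolynomial.aeval_X]; rfl

@[simp] lemma chiInvHom_X_inr (r : ρ) : chiInvHom A ρ q (X (Sum.inr r)) = X (Sum.inr r) := by
  rw [chiInvHom, MvPolynomial.aeval_X]; rfl

lemma cy_eq_algebraMap : cy A ρ q = algebraMap (Polynomial A) (MvPolynomial (Fin q ⊕ ρ) (Polynomial A)) Polynomial.X := rfl

@[simp] lemma chiHom_cy : chiHom A ρ q (cy A ρ q) = cy A ρ q := by
  rw [cy_eq_algebraMap]; exact (chiHom A ρ q).commutes _

@[simp] lemma chiInvHom_cy : chiInvHom A ρ q (cy A ρ q) = cy A ρ q := by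
  rw [cy_eq_algebraMap]; exact (chiInvHom A ρ q).commutes _

lemma chiHom_zfam {u : ℕ} (h1 : 1 ≤ u) (h2 : u ≤ q) :
    chiHom A ρ q (zfam (Polynomial A) q ρ u)
    = zfam (Polynomial A) q ρ u + cy A ρ q * zfam (Polynomial A) q ρ (u - 1) := by
  have e1 : zfam (Polynomial A) q ρ u = X (Sum.inl (⟨u - 1, by omega⟩ : Fin q)) :=
    zfam_in _ _ _ h1 h2
  rw [e1, chiHom_X_inl, show ((⟨u - 1, by omega⟩ : Fin q) : ℕ) = u - 1 from rfl, ← e1]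

lemma chiInvHom_zfam {u : ℕ} (h2 : u ≤ q) :
    chiInvHom A ρ q (zfam (Polynomial A) q ρ u) = zinv A ρ q u := by
  rcases Nat.eq_zero_or_pos u with h | h
  · subst h; rw [zfam_zero, map_one, zinv_zero]
  · rw [zfam_in _ _ _ h h2, chiInvHom_X_inl]
    congr 1
    show u - 1 + 1 = u
    omega

lemma chiHom_zinv {u : ℕ} (h2 : u ≤ q) :
    chiHom A ρ q (zinv A ρ q u) = zfam (Polynomial A) q ρ u := by
  induction u with
  | zero => rw [zinv_zero, map_one, zfam_zero]
  | succ u ih =>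
    rw [zinv_succ, map_sub, map_mul, chiHom_cy, ih (by omega),
      chiHom_zfam A ρ q (by omega) h2]
    simp

lemma chi_inv_right : (chiHom A ρ q).comp (chiInvHom A ρ q) = AlgHom.id _ _ := by
  apply MvPolynomial.algHom_ext
  rintro (j | r)
  · simp only [AlgHom.coe_comp, Function.comp_apply, chiInvHom_X_inl, AlgHom.coe_id, id_eq]
    rw [chiHom_zinv A ρ q (by omega), zfam_val]
  · simp

lemma chi_inv_left : (chiInvHom A ρ q).comp (chiHom A ρ q) = AlgHom.id _ _ := by
  apply MvPolynomial.algHom_ext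
  rintro (j | r)
  · simp only [AlgHom.coe_comp, Function.comp_apply, chiHom_X_inl, AlgHom.coe_id, id_eq]
    rw [map_add, map_mul, chiInvHom_X_inl, chiInvHom_cy,
      chiInvHom_zfam A ρ q (by omega), zinv_succ, zfam_val]
    ring
  · simp

/-- Index equivalence singling out the last `inl`-variable. -/
def eS : (Fin (q + 1) ⊕ ρ) ≃ Option (Fin q ⊕ ρ) where
  toFun s := Sum.elim
    (fun j : Fin (q + 1) => if h : (j : ℕ) < q then some (Sum.inl ⟨j, h⟩) else none)
    (fun r => some (Sum.inr r)) s
  invFun o := o.elim (Sum.inl (Fin.last q))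
    (fun s => Sum.elim (fun j : Fin q => Sum.inl j.castSucc) (fun r => Sum.inr r) s)
  left_inv := by
    rintro (j | r)
    · by_cases h : (j : ℕ) < q
      · simp only [Sum.elim_inl, dif_pos h, Option.elim_some]
        exact congrArg Sum.inl (Fin.ext (by simp))
      · simp only [Sum.elim_inl, dif_neg h, Option.elim_none]
        exact congrArg Sum.inl (Fin.ext (by simp [Fin.last]; omega))
    · simp
  right_inv := by
    rintro (_ | (j | r))
    · simp only [Option.elim_none, Sum.elim_inl]
      rw [dif_neg (by simp [Fin.last])]
    · simp only [Option.elim_some, Sum.elim_inl]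
      rw [dif_pos (by simp [Fin.castSucc])]
      exact congrArg some (congrArg Sum.inl (Fin.ext (by simp)))
    · simp

noncomputable def epsS : MvPolynomial (Fin (q + 1) ⊕ ρ) A ≃ₐ[A]
    Polynomial (MvPolynomial (Fin q ⊕ ρ) A) :=
  (renameEquiv A (eS ρ q)).trans (optionEquivLeft A (Fin q ⊕ ρ))

lemma epsS_X_inl_lt (j : Fin (q + 1)) (h : (j : ℕ) < q) :
    epsS A ρ q (X (Sum.inl j)) = Polynomial.C (X (Sum.inl ⟨j, h⟩)) := by
  rw [epsS, AlgEquiv.trans_apply, renameEquiv_apply, rename_X]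
  have he : eS ρ q (Sum.inl j) = some (Sum.inl ⟨j, h⟩) := by
    simp only [eS, Equiv.coe_fn_mk, Sum.elim_inl, dif_pos h]
  rw [he, optionEquivLeft_X_some]

lemma epsS_X_last (j : Fin (q + 1)) (h : (j : ℕ) = q) :
    epsS A ρ q (X (Sum.inl j)) = Polynomial.X := by
  rw [epsS, AlgEquiv.trans_apply, renameEquiv_apply, rename_X]
  have he : eS ρ q (Sum.inl j) = none := by
    simp only [eS, Equiv.coe_fn_mk, Sum.elim_inl]
    rw [dif_neg (by omega)]
  rw [he, optionEquivLeft_X_none]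

lemma epsS_X_inr (r : ρ) :
    epsS A ρ q (X (Sum.inr r)) = Polynomial.C (X (Sum.inr r)) := by
  rw [epsS, AlgEquiv.trans_apply, renameEquiv_apply, rename_X]
  have he : eS ρ q (Sum.inr r) = some (Sum.inr r) := by
    simp only [eS, Equiv.coe_fn_mk, Sum.elim_inr]
  rw [he, optionEquivLeft_X_some]

noncomputable def epsT : MvPolynomial (Fin q ⊕ ρ) (Polynomial A) ≃ₐ[A]
    Polynomial (MvPolynomial (Fin q ⊕ ρ) A) :=
  (optionEquivRight A (Fin q ⊕ ρ)).symm.trans (optionEquivLeft A (Fin q ⊕ ρ))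

lemma epsT_cy : epsT A ρ q (cy A ρ q) = Polynomial.X := by
  rw [epsT, AlgEquiv.trans_apply]
  have h1 : (optionEquivRight A (Fin q ⊕ ρ)).symm (C Polynomial.X) = X none := by
    rw [AlgEquiv.symm_apply_eq, optionEquivRight_X_none]
  rw [cy, h1, optionEquivLeft_X_none]

lemma epsT_X (s : Fin q ⊕ ρ) : epsT A ρ q (X s) = Polynomial.C (X s) := by
  rw [epsT, AlgEquiv.trans_apply]
  have h1 : (optionEquivRight A (Fin q ⊕ ρ)).symm (X s) = X (some s) := by
    rw [AlgEquiv.symm_apply_eq, optionEquivRight_X_some]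
  rw [h1, optionEquivLeft_X_some]

lemma epsT_zfam (u : ℕ) :
    epsT A ρ q (zfam (Polynomial A) q ρ u) = Polynomial.C (zfam A q ρ u) := by
  rcases Nat.eq_zero_or_pos u with h | h
  · subst h
    rw [zfam_zero, zfam_zero, map_one, Polynomial.C_1]
  by_cases h2 : u ≤ q
  · rw [zfam_in _ _ _ h h2, zfam_in _ _ _ h h2, epsT_X]
  · rw [zfam_out _ _ _ (by omega), zfam_out _ _ _ (by omega), map_zero, Polynomial.C_0]

noncomputable def Fpoly : Polynomial (MvPolynomial (Fin q ⊕ ρ) A) :=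
  ∑ i ∈ Finset.range (q + 1),
    Polynomial.C ((-1 : MvPolynomial (Fin q ⊕ ρ) A) ^ i * zfam A q ρ (q - i))
      * Polynomial.X ^ (i + 1)

lemma epsT_cy_mul_zinv : epsT A ρ q (cy A ρ q * zinv A ρ q q) = Fpoly A ρ q := by
  rw [zinv, Finset.mul_sum, map_sum, Fpoly]
  refine Finset.sum_congr rfl fun i _ => ?_
  rw [map_mul, map_mul, map_pow, map_neg, epsT_cy, epsT_zfam]
  simp only [map_mul, map_pow, map_neg, map_one]
  ring

lemma Fpoly_spec [Nontrivial A] :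
    (Fpoly A ρ q).natDegree = q + 1 ∧ ((Fpoly A ρ q).Monic ∨ (- Fpoly A ρ q).Monic) := by
  set V := MvPolynomial (Fin q ⊕ ρ) A
  set L : Polynomial V := ∑ i ∈ Finset.range q,
    Polynomial.C ((-1 : V) ^ (q + i) * zfam A q ρ (q - i)) * Polynomial.X ^ (i + 1) with hL
  have hdegL : L.degree < ((q + 1 : ℕ) : WithBot ℕ) := by
    refine lt_of_le_of_lt (Polynomial.degree_sum_le _ _) ?_
    rw [Finset.sup_lt_iff (by exact WithBot.bot_lt_coe _)]
    intro i hi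
    refine lt_of_le_of_lt (Polynomial.degree_C_mul_X_pow_le _ _) ?_
    have hi' := Finset.mem_range.1 hi
    exact_mod_cast (show i + 1 < q + 1 by omega)
  have hGsplit : Polynomial.C ((-1 : V) ^ q) * Fpoly A ρ q = Polynomial.X ^ (q + 1) + L := by
    rw [Fpoly, Finset.mul_sum, Finset.sum_range_succ]
    have hlast : Polynomial.C ((-1 : V) ^ q) *
        (Polynomial.C ((-1 : V) ^ q * zfam A q ρ (q - q)) * Polynomial.X ^ (q + 1))
        = Polynomial.X ^ (q + 1) := by
      rw [Nat.sub_self, zfam_zero, mul_one, ← mul_assoc, ← map_mul, ← pow_add,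
        Even.neg_one_pow ⟨q, by ring⟩, map_one, one_mul]
    rw [hlast, hL, add_comm]
    refine congrArg (HAdd.hAdd _) ?_
    refine Finset.sum_congr rfl fun i _ => ?_
    rw [← mul_assoc, ← map_mul, ← mul_assoc, ← pow_add]
  have hG : (Polynomial.X ^ (q + 1) + L).Monic := Polynomial.monic_X_pow_add hdegL
  have hGdeg : (Polynomial.X ^ (q + 1) + L).natDegree = q + 1 := by
    have hdeg : (Polynomial.X ^ (q + 1) + L).degree = ((q + 1 : ℕ) : WithBot ℕ) := by
      rw [Polynomial.degree_add_eq_left_of_degree_lt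
        (by rw [Polynomial.degree_X_pow]; exact hdegL), Polynomial.degree_X_pow]
    exact Polynomial.natDegree_eq_of_degree_eq_some hdeg
  rcases Nat.even_or_odd q with hq | hq
  · have h1 : Polynomial.C ((-1 : V) ^ q) = 1 := by rw [hq.neg_one_pow, map_one]
    rw [h1, one_mul] at hGsplit
    rw [hGsplit]
    exact ⟨hGdeg, Or.inl hG⟩
  · have h1 : Polynomial.C ((-1 : V) ^ q) = -1 := by rw [hq.neg_one_pow, map_neg, map_one]
    rw [h1] at hGsplit
    have h2 : Fpoly A ρ q = -(Polynomial.X ^ (q + 1) + L) := by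
      rw [← hGsplit]; ring
    rw [h2]
    refine ⟨?_, Or.inr (by rwa [neg_neg])⟩
    rw [Polynomial.natDegree_neg]
    exact hGdeg

noncomputable def compF : Polynomial (MvPolynomial (Fin q ⊕ ρ) A) →ₐ[A]
    Polynomial (MvPolynomial (Fin q ⊕ ρ) A) :=
  (Polynomial.aeval (Fpoly A ρ q)).restrictScalars A

lemma compF_apply (p : Polynomial (MvPolynomial (Fin q ⊕ ρ) A)) :
    compF A ρ q p = p.comp (Fpoly A ρ q) := by
  show (Polynomial.aeval (Fpoly A ρ q)) p = _
  rw [Polynomial.aeval_def, Polynomial.comp, Polynomial.algebraMap_eq]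

lemma conj_eq :
    (epsT A ρ q).toAlgHom.comp (((chiInvHom A ρ q).restrictScalars A).comp (stepHom A ρ q))
    = (compF A ρ q).comp (epsS A ρ q).toAlgHom := by
  apply MvPolynomial.algHom_ext
  rintro (j | r)
  · simp only [AlgHom.coe_comp, Function.comp_apply, AlgEquiv.toAlgHom_eq_coe, AlgEquiv.coe_toAlgHom,
      AlgHom.coe_coe, AlgHom.coe_restrictScalars', stepHom_X_inl]
    by_cases h : (j : ℕ) < q
    · rw [map_add, map_mul, chiInvHom_cy, chiInvHom_zfam A ρ q (by omega),
        chiInvHom_zfam A ρ q (by omega)]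
      have hz : zinv A ρ q ((j : ℕ) + 1) + cy A ρ q * zinv A ρ q (j : ℕ)
          = zfam (Polynomial A) q ρ ((j : ℕ) + 1) := by
        rw [zinv_succ]; ring
      rw [hz, epsT_zfam, epsS_X_inl_lt A ρ q j h, compF_apply, Polynomial.C_comp]
      congr 1
      exact zfam_in _ _ _ (by omega) (by omega)
    · have hq : (j : ℕ) = q := by omega
      rw [zfam_out _ _ _ (by omega), zero_add, map_mul, chiInvHom_cy,
        chiInvHom_zfam A ρ q (by omega), hq, epsT_cy_mul_zinv,
        epsS_X_last A ρ q j hq, compF_apply, Polynomial.X_comp]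
  · simp only [AlgHom.coe_comp, Function.comp_apply, AlgEquiv.toAlgHom_eq_coe, AlgEquiv.coe_toAlgHom,
      AlgHom.coe_coe, AlgHom.coe_restrictScalars', stepHom_X_inr, chiInvHom_X_inr]
    rw [epsT_X, epsS_X_inr, compF_apply, Polynomial.C_comp]

noncomputable def chiEquiv : MvPolynomial (Fin q ⊕ ρ) (Polynomial A) ≃ₐ[Polynomial A]
    MvPolynomial (Fin q ⊕ ρ) (Polynomial A) :=
  AlgEquiv.ofAlgHom (chiHom A ρ q) (chiInvHom A ρ q) (chi_inv_right A ρ q) (chi_inv_left A ρ q)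

lemma step_bijective [Nontrivial A] :
    Function.Bijective (fun v : Fin (q + 1) → MvPolynomial (Fin (q + 1) ⊕ ρ) A =>
      ∑ t : Fin (q + 1), cy A ρ q ^ (t : ℕ) * stepHom A ρ q (v t)) := by
  obtain ⟨hdeg, hmon⟩ := Fpoly_spec A ρ q
  have hθ : Function.Bijective (theta (Fpoly A ρ q) (q + 1)) :=
    theta_bijective_sign _ hmon _ hdeg (by omega)
  have hfun : (fun v : Fin (q + 1) → MvPolynomial (Fin (q + 1) ⊕ ρ) A =>
      ∑ t : Fin (q + 1), cy A ρ q ^ (t : ℕ) * stepHom A ρ q (v t))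
      = (chiEquiv A ρ q) ∘ ((epsT A ρ q).symm) ∘ (theta (Fpoly A ρ q) (q + 1))
        ∘ (fun v (t : Fin (q + 1)) => epsS A ρ q (v t)) := by
    funext v
    simp only [Function.comp_apply, theta]
    rw [map_sum ((epsT A ρ q).symm), map_sum (chiEquiv A ρ q)]
    refine Finset.sum_congr rfl fun t _ => ?_
    -- rewrite the term on the RHS
    have hterm : (epsS A ρ q (v t)).comp (Fpoly A ρ q) = compF A ρ q (epsS A ρ q (v t)) :=
      (compF_apply A ρ q _).symm
    have hconj := congrFun (congrArg (fun (f :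
        MvPolynomial (Fin (q + 1) ⊕ ρ) A →ₐ[A] Polynomial (MvPolynomial (Fin q ⊕ ρ) A))
        => (f : MvPolynomial (Fin (q + 1) ⊕ ρ) A → Polynomial (MvPolynomial (Fin q ⊕ ρ) A)))
        (conj_eq A ρ q)) (v t)
    simp only [AlgHom.coe_comp, Function.comp_apply, AlgEquiv.toAlgHom_eq_coe, AlgEquiv.coe_toAlgHom,
      AlgHom.coe_coe, AlgHom.coe_restrictScalars'] at hconj
    -- hconj : epsT (chiInvHom (stepHom (v t))) = compF (epsS (v t))
    have h1 : (epsT A ρ q).symm (Polynomial.X ^ (t : ℕ) * (epsS A ρ q (v t)).comp (Fpoly A ρ q))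
        = cy A ρ q ^ (t : ℕ) * chiInvHom A ρ q (stepHom A ρ q (v t)) := by
      have ha : (epsT A ρ q).symm Polynomial.X = cy A ρ q := by
        rw [AlgEquiv.symm_apply_eq, epsT_cy]
      have hb : (epsT A ρ q).symm ((epsT A ρ q) ((chiInvHom A ρ q) ((stepHom A ρ q) (v t))))
          = (chiInvHom A ρ q) ((stepHom A ρ q) (v t)) := (epsT A ρ q).symm_apply_apply _
      rw [hterm, ← hconj, map_mul, map_pow, ha, hb]
    rw [h1, map_mul, map_pow]
    have h2 : chiEquiv A ρ q (cy A ρ q) = cy A ρ q := chiHom_cy A ρ q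
    have h3 : chiEquiv A ρ q (chiInvHom A ρ q (stepHom A ρ q (v t)))
        = stepHom A ρ q (v t) := by
      have := congrFun (congrArg (fun (f : MvPolynomial (Fin q ⊕ ρ) (Polynomial A) →ₐ[Polynomial A] MvPolynomial (Fin q ⊕ ρ) (Polynomial A)) => (f : MvPolynomial (Fin q ⊕ ρ) (Polynomial A) → MvPolynomial (Fin q ⊕ ρ) (Polynomial A))) (chi_inv_right A ρ q)) (stepHom A ρ q (v t))
      simp at this; exact this
    rw [h2, h3]
  rw [hfun]
  refine ((chiEquiv A ρ q).bijective.comp ((epsT A ρ q).symm.bijective.comp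
    (hθ.comp ?_)))
  constructor
  · intro v w h
    funext t
    exact (epsS A ρ q).injective (congrFun h t)
  · intro w
    exact ⟨fun t => (epsS A ρ q).symm (w t), by funext t; simp⟩

end Step


section Tower

open MvPolynomial

/-- Updated elementary-symmetric-style family after adjoining a variable. -/
noncomputable def nextE {A : Type} [CommRing A] (e : ℕ → A) : ℕ → Polynomial A :=
  fun i => Polynomial.C (e i) + (if i = 0 then 0 else Polynomial.X * Polynomial.C (e (i - 1)))

lemma nextE_zero {A : Type} [CommRing A] (e : ℕ → A) (he : e 0 = 1) : nextE e 0 = 1 := by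
  rw [nextE]; simp [he]

/-- The inert (`c`-block) variable family. -/
noncomputable def ccfam (B : Type) [CommRing B] (q n : ℕ) : ℕ → MvPolynomial (Fin q ⊕ Fin n) B :=
  fun u => if u = 0 then 1 else if h : u - 1 < n then X (Sum.inr ⟨u - 1, h⟩) else 0

/-- The tower-2 `Z`-family: convolution of the `E`-block and `c`-block variables. -/
noncomputable def zf2 (B : Type) [CommRing B] (q n : ℕ) : ℕ → MvPolynomial (Fin q ⊕ Fin n) B :=
  fun u => ∑ i ∈ Finset.range (u + 1), zfam B q (Fin n) i * ccfam B q n (u - i)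

lemma zf2_zero (B : Type) [CommRing B] (q n : ℕ) : zf2 B q n 0 = 1 := by
  rw [zf2]
  simp [zfam_zero, ccfam]

lemma zf2_q0 (B : Type) [CommRing B] (n : ℕ) (u : ℕ) : zf2 B 0 n u = ccfam B 0 n u := by
  rw [zf2, Finset.sum_eq_single 0]
  · rw [zfam_zero, one_mul, Nat.sub_zero]
  · intro i _ hi
    have : zfam B 0 (Fin n) i = 0 := by
      rw [zfam, if_neg hi, dif_neg (by omega)]
    rw [this, zero_mul]
  · intro h
    exact absurd (Finset.mem_range.2 (by omega)) h

/-- Tower-1 generators. -/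
noncomputable def g1 (A : Type) [CommRing A] (M : ℕ) (e : ℕ → A) :
    ℕ → MvPolynomial (Fin M ⊕ Fin 0) A :=
  fun ℓ => ∑ i ∈ Finset.range (ℓ + 1), MvPolynomial.C (e i) * zfam A M (Fin 0) (ℓ - i)

/-- Tower-2 generators. -/
noncomputable def g2 (A : Type) [CommRing A] (q n : ℕ) (e : ℕ → A) :
    ℕ → MvPolynomial (Fin q ⊕ Fin n) A :=
  fun ℓ => ∑ i ∈ Finset.range (ℓ + 1), MvPolynomial.C (e i) * zf2 A q n (ℓ - i)

lemma stepHom_C (A : Type) [CommRing A] (ρ : Type) (q : ℕ) (a : A) :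
    stepHom A ρ q (MvPolynomial.C a) = MvPolynomial.C (Polynomial.C a) := by
  rw [stepHom, MvPolynomial.aeval_C]
  rfl

lemma step_zfam (A : Type) [CommRing A] (ρ : Type) (q : ℕ) (u : ℕ) :
    stepHom A ρ q (zfam A (q + 1) ρ (u + 1))
    = zfam (Polynomial A) q ρ (u + 1) + cy A ρ q * zfam (Polynomial A) q ρ u := by
  by_cases h : u < q + 1
  · have h1 : zfam A (q + 1) ρ (u + 1) = X (Sum.inl (⟨u, h⟩ : Fin (q + 1))) := by
      rw [zfam_in _ _ _ (by omega) (by omega)]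
      exact congrArg X (congrArg Sum.inl (Fin.ext (by show u + 1 - 1 = u; omega)))
    rw [h1, stepHom_X_inl]
  · rw [zfam_out _ _ _ (by omega), map_zero,
      zfam_out _ _ _ (by omega), zfam_out _ _ _ (by omega)]
    ring

lemma step_ccfam (A : Type) [CommRing A] (n q : ℕ) (v : ℕ) :
    stepHom A (Fin n) q (ccfam A (q + 1) n v) = ccfam (Polynomial A) q n v := by
  rw [ccfam, ccfam]
  by_cases h0 : v = 0
  · simp [h0]
  · rw [if_neg h0, if_neg h0]
    by_cases h1 : v - 1 < n
    · rw [dif_pos h1, dif_pos h1, stepHom_X_inr]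
    · rw [dif_neg h1, dif_neg h1, map_zero]

lemma step_zf2 (A : Type) [CommRing A] (n q : ℕ) (u : ℕ) :
    stepHom A (Fin n) q (zf2 A (q + 1) n (u + 1))
    = zf2 (Polynomial A) q n (u + 1) + cy A (Fin n) q * zf2 (Polynomial A) q n u := by
  rw [zf2, map_sum]
  have hterm : ∀ i ∈ Finset.range (u + 2),
      stepHom A (Fin n) q (zfam A (q + 1) (Fin n) i * ccfam A (q + 1) n (u + 1 - i))
      = stepHom A (Fin n) q (zfam A (q + 1) (Fin n) i) * ccfam (Polynomial A) q n (u + 1 - i) := by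
    intro i _
    rw [map_mul, step_ccfam]
  rw [Finset.sum_congr rfl hterm]
  -- peel i = 0
  rw [Finset.sum_range_succ' (fun i =>
    stepHom A (Fin n) q (zfam A (q + 1) (Fin n) i) * ccfam (Polynomial A) q n (u + 1 - i)) (u + 1)]
  have h00 : stepHom A (Fin n) q (zfam A (q + 1) (Fin n) 0) * ccfam (Polynomial A) q n (u + 1 - 0)
      = ccfam (Polynomial A) q n (u + 1) := by
    rw [zfam_zero, map_one, one_mul]
    congr 1
  rw [h00]
  have hmid : ∀ i ∈ Finset.range (u + 1),
      stepHom A (Fin n) q (zfam A (q + 1) (Fin n) (i + 1)) * ccfam (Polynomial A) q n (u + 1 - (i + 1))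
      = zfam (Polynomial A) q (Fin n) (i + 1) * ccfam (Polynomial A) q n (u - i)
        + cy A (Fin n) q * (zfam (Polynomial A) q (Fin n) i * ccfam (Polynomial A) q n (u - i)) := by
    intro i _
    rw [step_zfam]
    have : u + 1 - (i + 1) = u - i := by omega
    rw [this]
    ring
  rw [Finset.sum_congr rfl hmid, Finset.sum_add_distrib]
  -- reassemble
  rw [zf2, zf2, Finset.mul_sum]
  rw [Finset.sum_range_succ' (fun i =>
    zfam (Polynomial A) q (Fin n) i * ccfam (Polynomial A) q n (u + 1 - i)) (u + 1)]
  have h00' : zfam (Polynomial A) q (Fin n) 0 * ccfam (Polynomial A) q n (u + 1 - 0)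
      = ccfam (Polynomial A) q n (u + 1) := by
    rw [zfam_zero, one_mul]
    congr 1
  rw [h00']
  have hmid' : ∀ i ∈ Finset.range (u + 1),
      zfam (Polynomial A) q (Fin n) (i + 1) * ccfam (Polynomial A) q n (u + 1 - (i + 1))
      = zfam (Polynomial A) q (Fin n) (i + 1) * ccfam (Polynomial A) q n (u - i) := by
    intro i _
    congr 1
    congr 1
    omega
  rw [Finset.sum_congr rfl hmid']
  ring

/-- The push lemma: the step homomorphism transforms convolution generators. -/
lemma push (A : Type) [CommRing A] (e : ℕ → A) (q : ℕ) (ρ : Type)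
    (Z : ℕ → MvPolynomial (Fin (q + 1) ⊕ ρ) A)
    (Z' : ℕ → MvPolynomial (Fin q ⊕ ρ) (Polynomial A))
    (hZ0 : Z 0 = 1) (hZ'0 : Z' 0 = 1)
    (hrel : ∀ u, stepHom A ρ q (Z (u + 1)) = Z' (u + 1) + cy A ρ q * Z' u)
    (ℓ : ℕ) :
    stepHom A ρ q (∑ i ∈ Finset.range (ℓ + 1), MvPolynomial.C (e i) * Z (ℓ - i))
    = ∑ i ∈ Finset.range (ℓ + 1), MvPolynomial.C (nextE e i) * Z' (ℓ - i) := by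
  rw [map_sum]
  have hterm : ∀ i ∈ Finset.range (ℓ + 1),
      stepHom A ρ q (MvPolynomial.C (e i) * Z (ℓ - i))
      = MvPolynomial.C (Polynomial.C (e i)) * stepHom A ρ q (Z (ℓ - i)) := by
    intro i _
    rw [map_mul, stepHom_C]
  rw [Finset.sum_congr rfl hterm]
  have hrhs : ∀ i ∈ Finset.range (ℓ + 1),
      MvPolynomial.C (nextE e i) * Z' (ℓ - i)
      = MvPolynomial.C (Polynomial.C (e i)) * Z' (ℓ - i)
        + (if i = 0 then 0 else
            cy A ρ q * MvPolynomial.C (Polynomial.C (e (i - 1))) * Z' (ℓ - i)) := by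
    intro i _
    by_cases hi : i = 0
    · subst hi
      rw [if_pos rfl, add_zero, nextE]
      rw [if_pos rfl, add_zero]
    · rw [if_neg hi, nextE, if_neg hi, map_add, map_mul, add_mul]
      congr 1
  rw [Finset.sum_congr rfl hrhs, Finset.sum_add_distrib]
  rw [Finset.sum_range_succ (fun i =>
    MvPolynomial.C (Polynomial.C (e i)) * stepHom A ρ q (Z (ℓ - i))) ℓ]
  rw [Nat.sub_self, hZ0, map_one]
  have hlhs : ∀ i ∈ Finset.range ℓ,
      MvPolynomial.C (Polynomial.C (e i)) * stepHom A ρ q (Z (ℓ - i))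
      = MvPolynomial.C (Polynomial.C (e i)) * Z' (ℓ - i)
        + cy A ρ q * MvPolynomial.C (Polynomial.C (e i)) * Z' (ℓ - 1 - i) := by
    intro i hi
    have hi' := Finset.mem_range.1 hi
    have h1 : ℓ - i = (ℓ - 1 - i) + 1 := by omega
    rw [h1, hrel]
    ring
  rw [Finset.sum_congr rfl hlhs, Finset.sum_add_distrib]
  rw [Finset.sum_range_succ' (fun i => if i = 0 then 0 else
      cy A ρ q * MvPolynomial.C (Polynomial.C (e (i - 1))) * Z' (ℓ - i)) ℓ]
  simp only [eq_self_iff_true, if_true, Nat.add_sub_cancel,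
    if_neg (Nat.succ_ne_zero _), add_zero]
  rw [Finset.sum_range_succ (fun i => MvPolynomial.C (Polynomial.C (e i)) * Z' (ℓ - i)) ℓ]
  rw [Nat.sub_self, hZ'0]
  have hre : ∀ i ∈ Finset.range ℓ,
      cy A ρ q * MvPolynomial.C (Polynomial.C (e i)) * Z' (ℓ - (i + 1))
      = cy A ρ q * MvPolynomial.C (Polynomial.C (e i)) * Z' (ℓ - 1 - i) := by
    intro i _
    have e2 : ℓ - (i + 1) = ℓ - 1 - i := by omega
    rw [e2]
  rw [Finset.sum_congr rfl hre]
  ring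

end Tower


section Assembly

open MvPolynomial

/-- `stepHom` as a `ℚ`-algebra homomorphism. -/
noncomputable def stepHomQ (A : Type) [CommRing A] [Algebra ℚ A] (ρ : Type) (q : ℕ) :
    MvPolynomial (Fin (q + 1) ⊕ ρ) A →ₐ[ℚ] MvPolynomial (Fin q ⊕ ρ) (Polynomial A) where
  toRingHom := (stepHom A ρ q).toRingHom
  commutes' := fun r => by
    show stepHom A ρ q (algebraMap ℚ _ r) = algebraMap ℚ _ r
    have h1 : (algebraMap ℚ (MvPolynomial (Fin (q + 1) ⊕ ρ) A)) r
        = MvPolynomial.C (algebraMap ℚ A r) := rfl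
    have h2 : (algebraMap ℚ (MvPolynomial (Fin q ⊕ ρ) (Polynomial A))) r
        = MvPolynomial.C (Polynomial.C (algebraMap ℚ A r)) := rfl
    rw [h1, h2, stepHom_C]

lemma stepHomQ_apply (A : Type) [CommRing A] [Algebra ℚ A] (ρ : Type) (q : ℕ)
    (x : MvPolynomial (Fin (q + 1) ⊕ ρ) A) : stepHomQ A ρ q x = stepHom A ρ q x := rfl

lemma step_transfer (A : Type) [CommRing A] [Algebra ℚ A] [Nontrivial A] (ρ : Type) (q : ℕ)
    (G : Set (MvPolynomial (Fin (q + 1) ⊕ ρ) A)) :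
    Nonempty ((MvPolynomial (Fin q ⊕ ρ) (Polynomial A) ⧸
        Ideal.span ((fun x => stepHom A ρ q x) '' G))
      ≃ₗ[ℚ] (Fin (q + 1) → MvPolynomial (Fin (q + 1) ⊕ ρ) A ⧸ Ideal.span G)) := by
  have hbij : Function.Bijective (psiMap (stepHomQ A ρ q) (cy A ρ q) (q + 1)) := by
    have hco : ⇑(psiMap (stepHomQ A ρ q) (cy A ρ q) (q + 1))
        = fun v : Fin (q + 1) → MvPolynomial (Fin (q + 1) ⊕ ρ) A =>
          ∑ t : Fin (q + 1), cy A ρ q ^ (t : ℕ) * stepHom A ρ q (v t) := rfl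
    rw [hco]
    exact step_bijective A ρ q
  have him : (⇑(stepHomQ A ρ q)) '' G = (fun x => stepHom A ρ q x) '' G := rfl
  have := transfer_equiv (stepHomQ A ρ q) (cy A ρ q) (q + 1) (by omega) hbij G
  rwa [him] at this

lemma finrank_eq_of_equiv_pi {V W : Type*} [AddCommGroup V] [Module ℚ V]
    [AddCommGroup W] [Module ℚ W] {m : ℕ} (hm : m ≠ 0) (e : V ≃ₗ[ℚ] (Fin m → W)) :
    Module.finrank ℚ V = m * Module.finrank ℚ W := by
  by_cases h : FiniteDimensional ℚ W
  · exact finrank_of_equiv_pi e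
  · have h1 : ¬ FiniteDimensional ℚ V := fun hV => h ((findim_iff_of_equiv_pi hm e).1 hV)
    rw [Module.finrank_of_infinite_dimensional h1, Module.finrank_of_infinite_dimensional h]
    ring

/-- The quotient of a polynomial ring by the ideal generated by all variables. -/
lemma quot_span_X (σ : Type) :
    FiniteDimensional ℚ (MvPolynomial σ ℚ ⧸
        Ideal.span (Set.range (X : σ → MvPolynomial σ ℚ)))
    ∧ Module.finrank ℚ (MvPolynomial σ ℚ ⧸
        Ideal.span (Set.range (X : σ → MvPolynomial σ ℚ))) = 1 := by
  set I := Ideal.span (Set.range (X : σ → MvPolynomial σ ℚ)) with hI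
  set φ : MvPolynomial σ ℚ →ₐ[ℚ] ℚ := aeval (fun _ : σ => (0 : ℚ)) with hφ
  have hsurj : Function.Surjective φ := fun r =>
    ⟨MvPolynomial.C r, by rw [hφ, MvPolynomial.aeval_C]; simp⟩
  have hkey : ∀ f : MvPolynomial σ ℚ, f - MvPolynomial.C (φ f) ∈ I := by
    intro f
    induction f using MvPolynomial.induction_on with
    | C a =>
      rw [hφ, MvPolynomial.aeval_C]
      simp
    | add p q hp hq =>
      have : p + q - MvPolynomial.C (φ (p + q))
          = (p - MvPolynomial.C (φ p)) + (q - MvPolynomial.C (φ q)) := by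
        rw [map_add, map_add]; ring
      rw [this]
      exact Ideal.add_mem _ hp hq
    | mul_X p s hp =>
      have hzero : φ (p * X s) = 0 := by
        rw [map_mul, hφ, MvPolynomial.aeval_X]
        simp
      rw [hzero, map_zero, sub_zero]
      exact Ideal.mul_mem_left _ _ (Ideal.subset_span ⟨s, rfl⟩)
  have hker : RingHom.ker φ = I := by
    apply le_antisymm
    · intro f hf
      have hf0 : φ f = 0 := hf
      have := hkey f
      rwa [hf0, map_zero, sub_zero] at this
    · rw [Ideal.span_le]
      rintro x ⟨s, rfl⟩
      show φ (X s) = 0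
      rw [hφ, MvPolynomial.aeval_X]
  have e1 : (MvPolynomial σ ℚ ⧸ I) ≃ₐ[ℚ] ℚ :=
    (Ideal.quotientEquivAlgOfEq ℚ hker.symm).trans
      (Ideal.quotientKerAlgEquivOfSurjective hsurj)
  constructor
  · exact Module.Finite.equiv e1.toLinearEquiv.symm
  · rw [e1.toLinearEquiv.finrank_eq]
    exact Module.finrank_self ℚ

end Assembly

section Assembly2

open MvPolynomial

noncomputable def dlt : ℕ → ℚ := fun i => if i = 0 then 1 else 0

lemma dlt_zero : dlt 0 = 1 := by rw [dlt]; simp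

lemma delta_conv {σ : Type} (f : ℕ → MvPolynomial σ ℚ) (ℓ : ℕ) :
    ∑ i ∈ Finset.range (ℓ + 1), MvPolynomial.C (dlt i) * f (ℓ - i) = f ℓ := by
  rw [Finset.sum_eq_single 0]
  · rw [dlt]; simp
  · intro i _ hi
    rw [dlt]; simp [if_neg hi]
  · intro h; exact absurd (Finset.mem_range.2 (by omega)) h

lemma g1_delta (M : ℕ) (ℓ : ℕ) : g1 ℚ M dlt ℓ = zfam ℚ M (Fin 0) ℓ := delta_conv _ ℓ

lemma g2_delta (q n : ℕ) (ℓ : ℕ) : g2 ℚ q n dlt ℓ = zf2 ℚ q n ℓ := delta_conv _ ℓ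

lemma rename_zfam_swap (A : Type) [CommRing A] (n : ℕ) (u : ℕ) :
    rename (⇑(Equiv.sumComm (Fin n) (Fin 0))) (zfam A n (Fin 0) u) = ccfam A 0 n u := by
  rw [zfam, ccfam]
  by_cases h0 : u = 0
  · simp [h0]
  · rw [if_neg h0, if_neg h0]
    by_cases h1 : u - 1 < n
    · rw [dif_pos h1, dif_pos h1, rename_X]; rfl
    · rw [dif_neg h1, dif_neg h1, map_zero]

lemma rename_g1_swap (A : Type) [CommRing A] (n : ℕ) (e : ℕ → A) (ℓ : ℕ) :
    rename (⇑(Equiv.sumComm (Fin n) (Fin 0))) (g1 A n e ℓ) = g2 A 0 n e ℓ := by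
  rw [g1, g2, map_sum]
  refine Finset.sum_congr rfl fun i _ => ?_
  rw [map_mul, rename_C, rename_zfam_swap, zf2_q0]

lemma quot_rename (A : Type) [CommRing A] [Algebra ℚ A] {σ τ : Type} (f : σ ≃ τ)
    (S : Set (MvPolynomial σ A)) :
    Nonempty ((MvPolynomial σ A ⧸ Ideal.span S) ≃ₗ[ℚ]
      (MvPolynomial τ A ⧸ Ideal.span ((fun x => rename (⇑f) x) '' S))) := by
  refine ⟨(Ideal.quotientEquivAlg (Ideal.span S) _
    ((renameEquiv A f).restrictScalars ℚ) ?_).toLinearEquiv⟩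
  rw [Ideal.map_span]
  rfl

/-- The main two-tower induction. -/
lemma towers (n N : ℕ) : ∀ (q : ℕ) (A : Type) [CommRing A] [Algebra ℚ A] [Nontrivial A],
    ∀ e : ℕ → A, e 0 = 1 →
    ((FiniteDimensional ℚ (MvPolynomial (Fin (n + q) ⊕ Fin 0) A ⧸
        Ideal.span (g1 A (n + q) e '' Set.Icc 1 N)) ↔
      FiniteDimensional ℚ (MvPolynomial (Fin q ⊕ Fin n) A ⧸
        Ideal.span (g2 A q n e '' Set.Icc 1 N)))
     ∧ Nat.factorial (n + q) * Module.finrank ℚ (MvPolynomial (Fin (n + q) ⊕ Fin 0) A ⧸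
          Ideal.span (g1 A (n + q) e '' Set.Icc 1 N))
        = Nat.factorial n * Nat.factorial q *
          Module.finrank ℚ (MvPolynomial (Fin q ⊕ Fin n) A ⧸
          Ideal.span (g2 A q n e '' Set.Icc 1 N))) := by
  intro q
  induction q with
  | zero =>
    intro A _ _ _ e he
    obtain ⟨E⟩ := quot_rename A (Equiv.sumComm (Fin n) (Fin 0))
      (g1 A (n + 0) e '' Set.Icc 1 N)
    have himg : ((fun x => rename (⇑(Equiv.sumComm (Fin n) (Fin 0))) x) ''
        (g1 A (n + 0) e '' Set.Icc 1 N)) = g2 A 0 n e '' Set.Icc 1 N := by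
      rw [Set.image_image]
      exact Set.image_congr fun ℓ _ => rename_g1_swap A n e ℓ
    rw [himg] at E
    refine ⟨⟨fun h => Module.Finite.equiv E, fun h => Module.Finite.equiv E.symm⟩, ?_⟩
    erw [E.finrank_eq, Nat.factorial_zero]
    ring
  | succ q ih =>
    intro A _ _ _ e he
    obtain ⟨E1⟩ := step_transfer A (Fin 0) (n + q) (g1 A (n + (q + 1)) e '' Set.Icc 1 N)
    obtain ⟨E2⟩ := step_transfer A (Fin n) q (g2 A (q + 1) n e '' Set.Icc 1 N)
    have hp1 : ((fun x => stepHom A (Fin 0) (n + q) x) ''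
        (g1 A (n + (q + 1)) e '' Set.Icc 1 N))
        = g1 (Polynomial A) (n + q) (nextE e) '' Set.Icc 1 N := by
      rw [Set.image_image]
      refine Set.image_congr fun ℓ _ => ?_
      exact push A e (n + q) (Fin 0) _ _ (zfam_zero _ _ _) (zfam_zero _ _ _)
        (fun u => step_zfam A (Fin 0) (n + q) u) ℓ
    have hp2 : ((fun x => stepHom A (Fin n) q x) '' (g2 A (q + 1) n e '' Set.Icc 1 N))
        = g2 (Polynomial A) q n (nextE e) '' Set.Icc 1 N := by
      rw [Set.image_image]
      refine Set.image_congr fun ℓ _ => ?_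
      exact push A e q (Fin n) _ _ (zf2_zero _ _ _) (zf2_zero _ _ _)
        (fun u => step_zf2 A n q u) ℓ
    rw [hp1] at E1
    rw [hp2] at E2
    obtain ⟨ih1, ih2⟩ := ih (Polynomial A) (nextE e) (nextE_zero e he)
    constructor
    · constructor
      · intro h1
        have hQ1' := (findim_iff_of_equiv_pi (by omega) E1).2 h1
        have hQ2' := ih1.1 hQ1'
        exact (findim_iff_of_equiv_pi (by omega) E2).1 hQ2'
      · intro h2
        have hQ2' := (findim_iff_of_equiv_pi (by omega) E2).2 h2
        have hQ1' := ih1.2 hQ2'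
        exact (findim_iff_of_equiv_pi (by omega) E1).1 hQ1'
    · have r1 := finrank_eq_of_equiv_pi (by omega) E1
      have r2 := finrank_eq_of_equiv_pi (by omega) E2
      rw [r1, r2] at ih2
      show Nat.factorial ((n + q) + 1) * _ = _
      rw [Nat.factorial_succ ((n + q)), Nat.factorial_succ q]
      calc ((n + q) + 1) * (n + q).factorial *
            Module.finrank ℚ (MvPolynomial (Fin (n + (q + 1)) ⊕ Fin 0) A ⧸
              Ideal.span (g1 A (n + (q + 1)) e '' Set.Icc 1 N))
          = (n + q).factorial * (((n + q) + 1) *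
            Module.finrank ℚ (MvPolynomial (Fin (n + (q + 1)) ⊕ Fin 0) A ⧸
              Ideal.span (g1 A (n + (q + 1)) e '' Set.Icc 1 N))) := by ring
        _ = n.factorial * q.factorial * ((q + 1) *
            Module.finrank ℚ (MvPolynomial (Fin (q + 1) ⊕ Fin n) A ⧸
              Ideal.span (g2 A (q + 1) n e '' Set.Icc 1 N))) := ih2
        _ = n.factorial * ((q + 1) * q.factorial) *
            Module.finrank ℚ (MvPolynomial (Fin (q + 1) ⊕ Fin n) A ⧸
              Ideal.span (g2 A (q + 1) n e '' Set.Icc 1 N)) := by ring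

end Assembly2

section Final

open MvPolynomial

lemma g1_bottom_set (n k : ℕ) :
    g1 ℚ (n + k) dlt '' Set.Icc 1 (n + k)
    = Set.range (X : (Fin (n + k) ⊕ Fin 0) → MvPolynomial (Fin (n + k) ⊕ Fin 0) ℚ) := by
  ext x
  constructor
  · rintro ⟨ℓ, ⟨h1, h2⟩, rfl⟩
    rw [g1_delta, zfam_in _ _ _ h1 h2]
    exact ⟨Sum.inl ⟨ℓ - 1, by omega⟩, rfl⟩
  · rintro ⟨s, rfl⟩
    rcases s with j | r
    · refine ⟨(j : ℕ) + 1, ⟨by omega, by have := j.isLt; omega⟩, ?_⟩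
      rw [g1_delta, zfam_val]
    · exact r.elim0

lemma map_cls {A B : Type} [CommRing A] [CommRing B] {F : Type*} [FunLike F A B]
    [RingHomClass F A B] (f : F) {m : ℕ}
    (v : Fin m → A) (u : ℕ) : f (cls v u) = cls (fun j => f (v j)) u := by
  rw [cls, cls]
  by_cases h0 : u = 0
  · simp [h0]
  · rw [if_neg h0, if_neg h0]
    by_cases h1 : u - 1 < m
    · rw [dif_pos h1, dif_pos h1]
    · rw [dif_neg h1, dif_neg h1, map_zero]

lemma sPol_match (n k : ℕ) (ℓ : ℕ) :
    rename (⇑(Equiv.sumComm (Fin n) (Fin k))) (sPol n k ℓ) = g2 ℚ k n dlt ℓ := by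
  rw [sPol, map_sum, g2_delta, zf2]
  have hterm : ∀ ij ∈ Finset.HasAntidiagonal.antidiagonal ℓ,
      rename (⇑(Equiv.sumComm (Fin n) (Fin k)))
        (cls (fun i : Fin n => X (Sum.inl i)) ij.1 *
          cls (fun j : Fin k => X (Sum.inr j)) ij.2)
      = ccfam ℚ k n ij.1 * zfam ℚ k (Fin n) ij.2 := by
    intro ij _
    rw [map_mul, map_cls, map_cls]
    congr 1
    · have hv : (fun i : Fin n =>
          (rename (⇑(Equiv.sumComm (Fin n) (Fin k)))) (X (Sum.inl i)))
          = (fun i : Fin n => (X (Sum.inr i) : MvPolynomial (Fin k ⊕ Fin n) ℚ)) := by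
        funext i
        show rename (⇑(Equiv.sumComm (Fin n) (Fin k))) (X (Sum.inl i)) = _
        rw [rename_X]
        rfl
      rw [hv]
      rfl
    · have hv : (fun j : Fin k =>
          (rename (⇑(Equiv.sumComm (Fin n) (Fin k)))) (X (Sum.inr j)))
          = (fun j : Fin k => (X (Sum.inl j) : MvPolynomial (Fin k ⊕ Fin n) ℚ)) := by
        funext j
        show rename (⇑(Equiv.sumComm (Fin n) (Fin k))) (X (Sum.inr j)) = _
        rw [rename_X]
        rfl
      rw [hv]
      rfl
  rw [Finset.sum_congr rfl hterm, Finset.Nat.sum_antidiagonal_eq_sum_range_succ_mk,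
    ← Finset.sum_range_reflect]
  refine Finset.sum_congr rfl fun j hj => ?_
  have hj' := Finset.mem_range.1 hj
  have e1 : ℓ + 1 - 1 - j = ℓ - j := by omega
  have e2 : ℓ - (ℓ - j) = j := by omega
  rw [e1, e2]
  ring

lemma range_eq_image_Icc {α : Type*} (f : ℕ → α) (N : ℕ) :
    Set.range (fun ℓ : Fin N => f (ℓ.1 + 1)) = f '' Set.Icc 1 N := by
  ext x
  constructor
  · rintro ⟨ℓ, rfl⟩
    exact ⟨ℓ.1 + 1, ⟨by omega, by have := ℓ.isLt; omega⟩, rfl⟩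
  · rintro ⟨u, ⟨h1, h2⟩, rfl⟩
    exact ⟨⟨u - 1, by omega⟩, by show f (u - 1 + 1) = f u; congr 1; omega⟩

theorem main_result (n k : ℕ) :
    FiniteDimensional ℚ
        (PRing n k ⧸ Ideal.span
          (Set.range fun ℓ : Fin (n + k) => sPol n k (ℓ.1 + 1))) ∧
      Module.finrank ℚ
          (PRing n k ⧸ Ideal.span
            (Set.range fun ℓ : Fin (n + k) => sPol n k (ℓ.1 + 1))) =
        Nat.choose (n + k) n := by
  obtain ⟨hfd1, hr1⟩ := quot_span_X (Fin (n + k) ⊕ Fin 0)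
  obtain ⟨hiff, heq⟩ := towers n (n + k) k ℚ dlt dlt_zero
  rw [g1_bottom_set] at hiff heq
  have hfd2 : FiniteDimensional ℚ (MvPolynomial (Fin k ⊕ Fin n) ℚ ⧸
      Ideal.span (g2 ℚ k n dlt '' Set.Icc 1 (n + k))) := hiff.1 hfd1
  rw [hr1, mul_one] at heq
  obtain ⟨E⟩ := quot_rename ℚ (Equiv.sumComm (Fin n) (Fin k))
    (Set.range fun ℓ : Fin (n + k) => sPol n k (ℓ.1 + 1))
  have himg : ((fun x => rename (⇑(Equiv.sumComm (Fin n) (Fin k))) x) ''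
      Set.range (fun ℓ : Fin (n + k) => sPol n k (ℓ.1 + 1)))
      = g2 ℚ k n dlt '' Set.Icc 1 (n + k) := by
    rw [← Set.range_comp]
    have : ((fun x => rename (⇑(Equiv.sumComm (Fin n) (Fin k))) x) ∘
        (fun ℓ : Fin (n + k) => sPol n k (ℓ.1 + 1)))
        = fun ℓ : Fin (n + k) => g2 ℚ k n dlt (ℓ.1 + 1) := by
      funext ℓ
      exact sPol_match n k (ℓ.1 + 1)
    rw [this, range_eq_image_Icc]
  rw [himg] at E
  constructor
  · exact Module.Finite.equiv E.symm
  · rw [E.finrank_eq]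
    have hch := Nat.choose_mul_factorial_mul_factorial (show n ≤ n + k by omega)
    have hsub : n + k - n = k := by omega
    rw [hsub] at hch
    have hpos : 0 < n.factorial * k.factorial :=
      Nat.mul_pos n.factorial_pos k.factorial_pos
    refine Nat.eq_of_mul_eq_mul_left hpos ?_
    calc n.factorial * k.factorial * Module.finrank ℚ (MvPolynomial (Fin k ⊕ Fin n) ℚ ⧸
          Ideal.span (g2 ℚ k n dlt '' Set.Icc 1 (n + k)))
        = (n + k).factorial := by rw [← heq]
      _ = (n + k).choose n * n.factorial * k.factorial := hch.symm
      _ = n.factorial * k.factorial * (n + k).choose n := by ring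

end Final

end Grassmann

/-- The quotient of `A = ℚ[p₁,…,p_n,p'₁,…,p'_k]` by the ideal
generated by `s_ℓ = Σ_{i+j=ℓ} pᵢp'ⱼ`, `1 ≤ ℓ ≤ n+k`, is a finite-dimensional
`ℚ`-vector space of dimension `(n+k choose n)`. -/
theorem cohomology_of_grassmannian_dimension (n k : ℕ) :
    FiniteDimensional ℚ
        (PRing n k ⧸ Ideal.span
          (Set.range fun ℓ : Fin (n + k) => sPol n k (ℓ.1 + 1))) ∧
      Module.finrank ℚ
          (PRing n k ⧸ Ideal.span
            (Set.range fun ℓ : Fin (n + k) => sPol n k (ℓ.1 + 1))) =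
        Nat.choose (n + k) n :=
  Grassmann.main_result n k
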